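/- If A is an n×n real matrix satisfying |a_{ij}| ≤ ε·|a_{ii}| for all i ≠ j, 1 ≤ i,j ≤ n, where ε ≥ 0, then |det(A)| ≥ (∏_{i=1}^n |a_{ii}|) · (1 − (n−1)²ε²). -/

import Mathlib

open Matrix Finset

/-- Elimination of the first row/column: `det A = A 0 0 * det (Schur complement)`. -/
lemma det_elim_aux {m : ℕ} (A : Matrix (Fin (m+2)) (Fin (m+2)) ℝ) (h0 : A 0 0 ≠ 0) :
    A.det = A 0 0 *
      (Matrix.det (fun i j : Fin (m+1) =>
        A i.succ j.succ - A i.succ 0 / A 0 0 * A 0 j.succ)) := by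
  classical
  set v : Fin (m+2) → ℝ := fun i => if i = 0 then 0 else -(A i 0 / A 0 0) with hv
  set w : Matrix (Fin (m+2)) (Fin (m+2)) ℝ := fun i j => if j = 0 then v i else 0 with hw
  set L : Matrix (Fin (m+2)) (Fin (m+2)) ℝ := 1 + w with hL
  have hLdet : L.det = 1 := by
    have htri : L.BlockTriangular OrderDual.toDual := by
      intro i j hij
      have hij' : i < j := hij
      have h1 : (1 : Matrix (Fin (m+2)) (Fin (m+2)) ℝ) i j = 0 :=
        Matrix.one_apply_ne (ne_of_lt hij')
      have h2 : w i j = 0 := by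
        have : j ≠ 0 := Fin.pos_iff_ne_zero.mp (lt_of_le_of_lt (Fin.zero_le i) hij')
        simp [hw, this]
      simp [hL, Matrix.add_apply, h1, h2]
    rw [Matrix.det_of_lowerTriangular L htri]
    have : ∀ i, L i i = 1 := by
      intro i
      by_cases h : i = 0
      · simp only [hL, Matrix.add_apply]; simp [hL, hw, hv, h, Matrix.add_apply]
      · simp only [hL, Matrix.add_apply]; simp [hL, hw, hv, h, Matrix.add_apply]
    simp [this]
  have hMA : (L * A).det = A.det := by
    rw [Matrix.det_mul, hLdet, one_mul]
  have hM : ∀ i j, (L * A) i j = A i j + v i * A 0 j := by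
    intro i j
    rw [Matrix.mul_apply]
    have : ∀ k, L i k * A k j = (if k = i then A i j else 0) + (if k = 0 then v i * A 0 j else 0) := by
      intro k
      by_cases hk : k = i
      · by_cases hk0 : k = 0
        · subst hk; simp only [hL, Matrix.add_apply]; simp [hL, hw, hv, hk0, Matrix.add_apply, Matrix.one_apply]
        · subst hk; simp only [hL, Matrix.add_apply]; simp [hL, hw, Matrix.add_apply, Matrix.one_apply, hk0]
      · by_cases hk0 : k = 0
        · subst hk0
          simp only [hL, Matrix.add_apply]; simp [hL, hw, hv, Matrix.add_apply, Matrix.one_apply, Ne.symm hk, hk]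
        · have hik : i ≠ k := fun h => hk h.symm
          simp only [hL, Matrix.add_apply]; simp [hL, hw, Matrix.add_apply, Matrix.one_apply, hik, hk, hk0]
    rw [Finset.sum_congr rfl (fun k _ => this k), Finset.sum_add_distrib]
    simp
  rw [← hMA, Matrix.det_succ_column_zero]
  have hcol : ∀ i : Fin (m+1), (L * A) i.succ 0 = 0 := by
    intro i
    rw [hM]
    simp only [hv, Fin.succ_ne_zero, if_false]
    field_simp
    ring
  rw [Fin.sum_univ_succ]
  have hz : ∀ i : Fin (m+1),
      (-1 : ℝ) ^ ((i.succ : Fin (m+2)) : ℕ) * (L * A) i.succ 0 *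
        Matrix.det ((L * A).submatrix (i.succ).succAbove Fin.succ) = 0 := by
    intro i; rw [hcol]; ring
  rw [Finset.sum_congr rfl (fun i _ => hz i), Finset.sum_const, smul_zero, add_zero]
  have h00 : (L * A) 0 0 = A 0 0 := by rw [hM]; simp [hv]
  have hsub : (L * A).submatrix (Fin.succAbove 0) Fin.succ =
      fun i j : Fin (m+1) => A i.succ j.succ - A i.succ 0 / A 0 0 * A 0 j.succ := by
    funext i j
    rw [Fin.succAbove_zero, Matrix.submatrix_apply, hM]
    simp [hv, Fin.succ_ne_zero]
    ring
  rw [h00, hsub]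
  simp

/-- The strong Ostrowski bound, by induction. -/
lemma key_bound : ∀ (m : ℕ) (ε : ℝ), 0 ≤ ε → (m : ℝ) * ε < 1 →
    ∀ A : Matrix (Fin (m+1)) (Fin (m+1)) ℝ, (∀ i, A i i ≠ 0) →
    (∀ i j, i ≠ j → |A i j| ≤ ε * |A i i|) →
    (∏ i, |A i i|) * ((1 - (m : ℝ) * ε) * (1 + ε) ^ m) ≤ |A.det| := by
  intro m
  induction m with
  | zero =>
    intro ε hε h1 A hd hA
    simp [Matrix.det_fin_one]
  | succ m ih =>
    intro ε hε h1 A hd hA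
    have hm1 : ((m : ℝ) + 1) * ε < 1 := by push_cast at h1 ⊢; linarith
    have hε1 : ε < 1 := by nlinarith [mul_nonneg (Nat.cast_nonneg m : (0:ℝ) ≤ m) hε]
    have h1ε : (0 : ℝ) < 1 - ε := by linarith
    have h00 : A 0 0 ≠ 0 := hd 0
    have habs00 : 0 < |A 0 0| := abs_pos.mpr h00
    set B : Matrix (Fin (m+1)) (Fin (m+1)) ℝ :=
      fun i j => A i.succ j.succ - A i.succ 0 / A 0 0 * A 0 j.succ with hB
    set ε' : ℝ := ε / (1 - ε) with hε'def
    have hε' : 0 ≤ ε' := div_nonneg hε (le_of_lt h1ε)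
    have hε'1 : (m : ℝ) * ε' < 1 := by
      rw [hε'def, ← mul_div_assoc, div_lt_one h1ε]
      linarith
    -- bound on the correction term
    have hcorr : ∀ i j : Fin (m+1), |A i.succ 0 / A 0 0 * A 0 j.succ| ≤ ε^2 * |A i.succ i.succ| := by
      intro i j
      have h1' : |A i.succ 0| ≤ ε * |A i.succ i.succ| := hA _ _ (Fin.succ_ne_zero i)
      have h2' : |A 0 j.succ| ≤ ε * |A 0 0| := hA _ _ (Ne.symm (Fin.succ_ne_zero j))
      have : |A i.succ 0 / A 0 0 * A 0 j.succ| = |A i.succ 0| * |A 0 j.succ| / |A 0 0| := by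
        rw [abs_mul, abs_div]; ring
      rw [this, div_le_iff₀ habs00]
      calc |A i.succ 0| * |A 0 j.succ| ≤ (ε * |A i.succ i.succ|) * (ε * |A 0 0|) :=
            mul_le_mul h1' h2' (abs_nonneg _) (by positivity)
        _ = ε^2 * |A i.succ i.succ| * |A 0 0| := by ring
    have hdiag : ∀ i : Fin (m+1), (1 - ε^2) * |A i.succ i.succ| ≤ |B i i| := by
      intro i
      have := hcorr i i
      have habs : |A i.succ i.succ| - |A i.succ 0 / A 0 0 * A 0 i.succ| ≤ |B i i| :=
        abs_sub_abs_le_abs_sub (A i.succ i.succ) (A i.succ 0 / A 0 0 * A 0 i.succ)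
      nlinarith [abs_nonneg (A i.succ i.succ)]
    have hdpos : ∀ i : Fin (m+1), 0 < |B i i| := by
      intro i
      have h1' : 0 < (1 - ε^2) * |A i.succ i.succ| := by
        have ha := abs_pos.mpr (hd i.succ)
        have h2 : (0:ℝ) < 1 - ε^2 := by nlinarith
        exact mul_pos h2 ha
      linarith [hdiag i]
    have hBd : ∀ i, B i i ≠ 0 := fun i => abs_pos.mp (hdpos i)
    have hoff : ∀ i j, i ≠ j → |B i j| ≤ ε' * |B i i| := by
      intro i j hij
      have hsucc : (i.succ : Fin (m+2)) ≠ j.succ := fun h => hij (Fin.succ_injective _ h)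
      have h1' : |A i.succ j.succ| ≤ ε * |A i.succ i.succ| := hA _ _ hsucc
      have h2' := hcorr i j
      have h3' : |B i j| ≤ ε * (1 + ε) * |A i.succ i.succ| := by
        rw [hB]
        calc |A i.succ j.succ - A i.succ 0 / A 0 0 * A 0 j.succ|
            ≤ |A i.succ j.succ| + |A i.succ 0 / A 0 0 * A 0 j.succ| := abs_sub _ _
          _ ≤ ε * |A i.succ i.succ| + ε^2 * |A i.succ i.succ| := add_le_add h1' h2'
          _ = ε * (1 + ε) * |A i.succ i.succ| := by ring
      have h4' : ε * (1 + ε) * |A i.succ i.succ| ≤ ε' * |B i i| := by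
        rw [hε'def, div_mul_eq_mul_div, le_div_iff₀ h1ε]
        have := hdiag i
        nlinarith [abs_nonneg (A i.succ i.succ)]
      linarith
    have hIH := ih ε' hε' hε'1 B hBd hoff
    -- product bound
    have hprod : (1 - ε^2)^(m+1) * ∏ i : Fin (m+1), |A i.succ i.succ| ≤ ∏ i, |B i i| := by
      have := Finset.prod_le_prod (s := Finset.univ)
        (f := fun i : Fin (m+1) => (1 - ε^2) * |A i.succ i.succ|) (g := fun i => |B i i|)
        (fun i _ => mul_nonneg (by nlinarith) (abs_nonneg _)) (fun i _ => hdiag i)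
      rwa [Finset.prod_mul_distrib, Finset.prod_const, Finset.card_univ, Fintype.card_fin] at this
    -- scalar identity
    have hid : (1 - ε^2)^(m+1) * ((1 - (m:ℝ) * ε') * (1 + ε')^m)
        = (1 - ((m:ℝ)+1) * ε) * (1 + ε)^(m+1) := by
      have he1 : (1 : ℝ) + ε' = 1 / (1 - ε) := by rw [hε'def]; field_simp; ring
      have he2 : (1 : ℝ) - (m:ℝ) * ε' = (1 - ((m:ℝ)+1) * ε) / (1 - ε) := by
        rw [hε'def]; field_simp; ring
      rw [he1, he2, div_pow, show (1:ℝ) - ε^2 = (1-ε)*(1+ε) by ring, mul_pow]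
      have hne : (1 - ε) ^ (m+1) ≠ 0 := pow_ne_zero _ (ne_of_gt h1ε)
      field_simp
      ring
    have hfacnn : 0 ≤ (1 - (m:ℝ) * ε') * (1 + ε')^m := by
      have h2 : 0 ≤ 1 - (m:ℝ) * ε' := by linarith
      exact mul_nonneg h2 (pow_nonneg (by linarith) m)
    -- assemble
    rw [det_elim_aux A h00, abs_mul, Fin.prod_univ_succ]
    push_cast
    have hchain : (∏ i : Fin (m+1), |A i.succ i.succ|) * ((1 - ((m:ℝ)+1) * ε) * (1 + ε)^(m+1))
        ≤ |B.det| := by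
      calc (∏ i : Fin (m+1), |A i.succ i.succ|) * ((1 - ((m:ℝ)+1) * ε) * (1 + ε)^(m+1))
          = ((1 - ε^2)^(m+1) * ∏ i : Fin (m+1), |A i.succ i.succ|) *
            ((1 - (m:ℝ) * ε') * (1 + ε')^m) := by
              rw [← hid, ← mul_assoc, mul_comm (∏ i : Fin (m+1), |A i.succ i.succ|)
                ((1 - ε^2)^(m+1))]
        _ ≤ (∏ i, |B i i|) * ((1 - (m:ℝ) * ε') * (1 + ε')^m) :=
            mul_le_mul_of_nonneg_right hprod hfacnn
        _ ≤ |B.det| := hIH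
    calc (|A 0 0| * ∏ i : Fin (m+1), |A i.succ i.succ|) * ((1 - ((m:ℝ)+1) * ε) * (1 + ε)^(m+1))
        = |A 0 0| * ((∏ i : Fin (m+1), |A i.succ i.succ|) * ((1 - ((m:ℝ)+1) * ε) * (1 + ε)^(m+1))) :=
          mul_assoc _ _ _
      _ ≤ |A 0 0| * |B.det| := mul_le_mul_of_nonneg_left hchain (le_of_lt habs00)

/-- If `A` is an `n × n` real matrix with `|a i j| ≤ ε |a i i|` for all `i ≠ j`,
where `ε ≥ 0`, then `|det A| ≥ (∏ i, |a i i|) (1 - (n-1)² ε²)`. -/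
theorem abs_det_lower_bound_diag_dominant_quadratic
    (n : ℕ) (hn : 1 ≤ n) (ε : ℝ) (hε : 0 ≤ ε)
    (A : Matrix (Fin n) (Fin n) ℝ)
    (hA : ∀ i j, i ≠ j → |A i j| ≤ ε * |A i i|) :
    (∏ i, |A i i|) * (1 - ((n : ℝ) - 1) ^ 2 * ε ^ 2) ≤ |A.det| := by
  obtain ⟨m, rfl⟩ : ∃ m, n = m + 1 := ⟨n - 1, (Nat.succ_pred_eq_of_pos hn).symm⟩
  have hcast : ((m+1 : ℕ) : ℝ) - 1 = (m : ℝ) := by push_cast; ring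
  rw [hcast]
  by_cases hzero : ∃ i, A i i = 0
  · obtain ⟨i, hi⟩ := hzero
    have : (∏ i, |A i i|) = 0 :=
      Finset.prod_eq_zero (Finset.mem_univ i) (abs_eq_zero.mpr hi)
    rw [this, zero_mul]
    exact abs_nonneg _
  · push_neg at hzero
    by_cases hsmall : (m : ℝ) * ε < 1
    · have hkey := key_bound m ε hε hsmall A hzero hA
      have hbern : 1 + (m : ℝ) * ε ≤ (1 + ε) ^ m := one_add_mul_le_pow (by linarith) m
      have hm0 : 0 ≤ 1 - (m : ℝ) * ε := le_of_lt (by linarith)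
      have hfac : 1 - (m : ℝ)^2 * ε^2 ≤ (1 - (m : ℝ) * ε) * (1 + ε) ^ m := by
        nlinarith
      have hpn : 0 ≤ ∏ i, |A i i| := Finset.prod_nonneg (fun i _ => abs_nonneg _)
      calc (∏ i, |A i i|) * (1 - (m : ℝ)^2 * ε^2)
          ≤ (∏ i, |A i i|) * ((1 - (m : ℝ) * ε) * (1 + ε) ^ m) :=
            mul_le_mul_of_nonneg_left hfac hpn
        _ ≤ |A.det| := hkey
    · push_neg at hsmall
      have hm0 : (0:ℝ) ≤ m := Nat.cast_nonneg m
      have : 1 - (m : ℝ)^2 * ε^2 ≤ 0 := by nlinarith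
      have hpn : 0 ≤ ∏ i, |A i i| := Finset.prod_nonneg (fun i _ => abs_nonneg _)
      calc (∏ i, |A i i|) * (1 - (m : ℝ)^2 * ε^2) ≤ 0 := mul_nonpos_of_nonneg_of_nonpos hpn this
        _ ≤ |A.det| := abs_nonneg _
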